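/- Let G be a finite simple graph that is well-covered. If x is a simplicial vertex of G, then for every vertex y ∈ N(x), the graph G \ y obtained by deleting y is also well-covered. -/
import Mathlib


open scoped Classical

variable {V : Type*}

/-- `S` is an independent set of the induced subgraph of `G` on the vertex set `A`. -/
def IsIndepIn (G : SimpleGraph V) (A S : Finset V) : Prop :=
  S ⊆ A ∧ ∀ u ∈ S, ∀ v ∈ S, ¬ G.Adj u v

/-- `S` is a maximal independent set of the induced subgraph of `G` on the vertex set `A`. -/
def IsMaxIndepIn (G : SimpleGraph V) (A S : Finset V) : Prop :=
  IsIndepIn G A S ∧ ∀ T, IsIndepIn G A T → S ⊆ T → T = S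

/-- The induced subgraph of `G` on the vertex set `A` is well-covered: all of its
maximal independent sets have the same cardinality. -/
def WellCoveredOn (G : SimpleGraph V) (A : Finset V) : Prop :=
  ∀ S T, IsMaxIndepIn G A S → IsMaxIndepIn G A T → S.card = T.card

/-- The closed neighbourhood of `x` deleted from `A`: the vertices of `A` distinct from `x`
and not adjacent to `x`. -/
noncomputable def delClosedNbhd (G : SimpleGraph V) (A : Finset V) (x : V) : Finset V :=
  A.filter fun y => y ≠ x ∧ ¬ G.Adj x y

/-- The induced subgraph of `G` on the vertex set `A` is vertex decomposable: it is
well-covered, and either it has no edges, or some vertex `x ∈ A` is such that deleting `x`,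
respectively the closed neighbourhood of `x`, leaves a vertex decomposable graph. -/
def VertexDecomposableOn (G : SimpleGraph V) (A : Finset V) : Prop :=
  WellCoveredOn G A ∧
    ((∀ u ∈ A, ∀ v ∈ A, ¬ G.Adj u v) ∨
      ∃ x, ∃ _h : x ∈ A,
        VertexDecomposableOn G (A.erase x) ∧
        VertexDecomposableOn G (delClosedNbhd G A x))
termination_by A.card
decreasing_by
  · exact Finset.card_erase_lt_of_mem (by assumption)
  · exact Finset.card_lt_card
      (Finset.filter_ssubset.mpr ⟨x, by assumption, by simp⟩)

/-- A finite simple graph is well-covered if all of its maximal independent sets have the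
same cardinality. -/
def WellCovered (G : SimpleGraph V) [Fintype V] : Prop :=
  WellCoveredOn G Finset.univ

/-- A finite simple graph is vertex decomposable. -/
def VertexDecomposable (G : SimpleGraph V) [Fintype V] : Prop :=
  VertexDecomposableOn G Finset.univ

/-- The set of shedding vertices of `G` : those vertices `x` such that both `G \ x` and
`G \ N[x]` are vertex decomposable. -/
def Shed (G : SimpleGraph V) [Fintype V] : Set V :=
  {x | VertexDecomposableOn G (Finset.univ.erase x) ∧
       VertexDecomposableOn G (delClosedNbhd G Finset.univ x)}

/-- `D` is a dominating set of `G`: every vertex not in `D` is adjacent to a vertex of `D`. -/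
def IsDominatingSet (G : SimpleGraph V) (D : Set V) : Prop :=
  ∀ v, v ∉ D → ∃ u ∈ D, G.Adj u v

/-- A vertex is simplicial if its neighbourhood induces a clique. -/
def IsSimplicialVertex (G : SimpleGraph V) (x : V) : Prop :=
  ∀ u v, G.Adj x u → G.Adj x v → u ≠ v → G.Adj u v

/-- If `G` is well-covered and `x` is a simplicial vertex, then for every
neighbour `y` of `x`, the graph `G \ y` is also well-covered. -/
theorem statement1 {V : Type*} [Fintype V] (G : SimpleGraph V)
    (hwc : WellCovered G) (x : V) (hx : IsSimplicialVertex G x) :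
    ∀ y, G.Adj x y → WellCoveredOn G (Finset.univ.erase y) := by
  intro y hxy
  have key : ∀ S, IsMaxIndepIn G (Finset.univ.erase y) S →
      IsMaxIndepIn G Finset.univ S := by
    intro S hS
    obtain ⟨⟨hSsub, hSind⟩, hSmax⟩ := hS
    refine ⟨⟨Finset.subset_univ S, hSind⟩, ?_⟩
    rintro T ⟨-, hTind⟩ hST
    refine Finset.Subset.antisymm ?_ hST
    intro v hv
    by_contra hvS
    have hvy : v = y := by
      by_contra hvy
      have hins : insert v S = S := by
        apply hSmax
        · refine ⟨?_, ?_⟩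
          · intro u hu
            rcases Finset.mem_insert.mp hu with h | h
            · subst h; exact Finset.mem_erase.mpr ⟨hvy, Finset.mem_univ u⟩
            · exact hSsub h
          · intro u hu w hw
            apply hTind
            · rcases Finset.mem_insert.mp hu with h | h
              · subst h; exact hv
              · exact hST h
            · rcases Finset.mem_insert.mp hw with h | h
              · subst h; exact hv
              · exact hST h
        · exact Finset.subset_insert v S
      exact hvS (hins ▸ Finset.mem_insert_self v S)
    subst hvy
    -- y ∈ T, and x must be adjacent to some s ∈ S, whence s ~ y : contradiction
    have hxS : x ∉ S := fun hxs => hTind x (hST hxs) v hv hxy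
    have hxy' : x ≠ v := fun h => G.irrefl (h ▸ hxy)
    have hnotind : ¬ (∀ u ∈ insert x S, ∀ w ∈ insert x S, ¬ G.Adj u w) := by
      intro hind
      have hins : insert x S = S := by
        apply hSmax
        · refine ⟨?_, hind⟩
          intro u hu
          rcases Finset.mem_insert.mp hu with h | h
          · subst h; exact Finset.mem_erase.mpr ⟨hxy', Finset.mem_univ u⟩
          · exact hSsub h
        · exact Finset.subset_insert x S
      exact hxS (hins ▸ Finset.mem_insert_self x S)
    push_neg at hnotind
    obtain ⟨u, hu, w, hw, huw⟩ := hnotind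
    have hs : ∃ s ∈ S, G.Adj x s := by
      rcases Finset.mem_insert.mp hu with h | h <;>
        rcases Finset.mem_insert.mp hw with h' | h'
      · exact absurd (h ▸ h' ▸ huw) (G.irrefl)
      · exact ⟨w, h', h ▸ huw⟩
      · exact ⟨u, h, h' ▸ (huw.symm)⟩
      · exact absurd huw (hSind u h w h')
    obtain ⟨s, hsS, hxs⟩ := hs
    have hsy : s ≠ v := (Finset.mem_erase.mp (hSsub hsS)).1
    exact hTind s (hST hsS) v hv (hx s v hxs hxy hsy)
  intro S T hS hT
  exact hwc S T (key S hS) (key T hT)
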